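/- Let U ∈ ℝ^{m×m} and V ∈ ℝ^{n×n} be orthogonal matrices and define weights w_i^{(k)} = ∑_{j=1}^k U_{j,i} V_{j,i} for i = 1,...,m and 1 ≤ k ≤ m ≤ n. Then |w_i^{(k)}| ≤ 1 for every i, and ∑_{i=1}^m |w_i^{(k)}| ≤ k. -/
import Mathlib


open Finset Matrix

lemma cs_abs_le_one {ι : Type*} (s : Finset ι) (f g : ι → ℝ)
    (hf : ∑ i ∈ s, f i ^ 2 ≤ 1) (hg : ∑ i ∈ s, g i ^ 2 ≤ 1) :
    |∑ i ∈ s, f i * g i| ≤ 1 := by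
  have h := Finset.sum_mul_sq_le_sq_mul_sq s f g
  nlinarith [sq_abs (∑ i ∈ s, f i * g i), abs_nonneg (∑ i ∈ s, f i * g i),
    Finset.sum_nonneg (fun i (_ : i ∈ s) => sq_nonneg (f i)),
    Finset.sum_nonneg (fun i (_ : i ∈ s) => sq_nonneg (g i))]

theorem ky_fan_weights_bound (m n : ℕ) (hmn : m ≤ n)
    (U : Matrix (Fin m) (Fin m) ℝ) (V : Matrix (Fin n) (Fin n) ℝ)
    (hU : U ∈ Matrix.orthogonalGroup (Fin m) ℝ)
    (hV : V ∈ Matrix.orthogonalGroup (Fin n) ℝ)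
    (k : ℕ) (hk1 : 1 ≤ k) (hkm : k ≤ m) :
    (∀ i : Fin m,
      |∑ j ∈ univ.filter (fun j : Fin m => (j : ℕ) < k),
          U j i * V (Fin.castLE hmn j) (Fin.castLE hmn i)| ≤ 1) ∧
    ∑ i : Fin m,
      |∑ j ∈ univ.filter (fun j : Fin m => (j : ℕ) < k),
          U j i * V (Fin.castLE hmn j) (Fin.castLE hmn i)| ≤ (k : ℝ) := by
  rw [Matrix.mem_orthogonalGroup_iff'] at hU
  rw [Matrix.mem_orthogonalGroup_iff] at hV
  have hUcol : ∀ i : Fin m, ∑ j, U j i ^ 2 = 1 := by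
    intro i
    have := congrFun (congrFun hU i) i
    simpa [Matrix.mul_apply, Matrix.one_apply, sq] using this
  have hVrow : ∀ j : Fin n, ∑ i, V j i ^ 2 = 1 := by
    intro j
    have := congrFun (congrFun hV j) j
    simpa [Matrix.mul_apply, Matrix.one_apply, sq] using this
  have hVcol : ∀ i : Fin n, ∑ j, V j i ^ 2 = 1 := by
    intro i
    have hV' : star V * V = 1 := (Matrix.mem_orthogonalGroup_iff' _ _).mp
      ((Matrix.mem_orthogonalGroup_iff _ _).mpr hV)
    have := congrFun (congrFun hV' i) i
    simpa [Matrix.mul_apply, Matrix.one_apply, sq] using this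
  -- sum over an injective embedding is bounded by the full sum
  have hinj : Function.Injective (Fin.castLE hmn) := Fin.castLE_injective hmn
  have hsub : ∀ (s : Finset (Fin m)) (h : Fin n → ℝ), (∀ x, 0 ≤ h x) →
      ∑ j ∈ s, h (Fin.castLE hmn j) ≤ ∑ j : Fin n, h j := by
    intro s h hpos
    rw [← Finset.sum_image (fun a _ b _ hab => hinj hab)]
    exact Finset.sum_le_sum_of_subset_of_nonneg (Finset.subset_univ _)
      (fun x _ _ => hpos x)
  have part1 : ∀ i : Fin m,
      |∑ j ∈ univ.filter (fun j : Fin m => (j : ℕ) < k),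
          U j i * V (Fin.castLE hmn j) (Fin.castLE hmn i)| ≤ 1 := by
    intro i
    apply cs_abs_le_one
    · calc ∑ j ∈ univ.filter (fun j : Fin m => (j : ℕ) < k), U j i ^ 2
          ≤ ∑ j, U j i ^ 2 :=
            Finset.sum_le_sum_of_subset_of_nonneg (Finset.subset_univ _)
              (fun x _ _ => sq_nonneg _)
        _ = 1 := hUcol i
    · calc ∑ j ∈ univ.filter (fun j : Fin m => (j : ℕ) < k),
            V (Fin.castLE hmn j) (Fin.castLE hmn i) ^ 2
          ≤ ∑ j : Fin n, V j (Fin.castLE hmn i) ^ 2 :=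
            hsub _ (fun j => V j (Fin.castLE hmn i) ^ 2) (fun _ => sq_nonneg _)
        _ = 1 := hVcol _
  refine ⟨part1, ?_⟩
  have hUrow : ∀ j : Fin m, ∑ i, U j i ^ 2 = 1 := by
    intro j
    have hU' : U * star U = 1 := (Matrix.mem_orthogonalGroup_iff _ _).mp
      ((Matrix.mem_orthogonalGroup_iff' _ _).mpr hU)
    have := congrFun (congrFun hU' j) j
    simpa [Matrix.mul_apply, Matrix.one_apply, sq] using this
  calc ∑ i : Fin m, |∑ j ∈ univ.filter (fun j : Fin m => (j : ℕ) < k),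
          U j i * V (Fin.castLE hmn j) (Fin.castLE hmn i)|
      ≤ ∑ i : Fin m, ∑ j ∈ univ.filter (fun j : Fin m => (j : ℕ) < k),
          |U j i| * |V (Fin.castLE hmn j) (Fin.castLE hmn i)| := by
        refine Finset.sum_le_sum fun i _ => ?_
        refine (Finset.abs_sum_le_sum_abs _ _).trans ?_
        refine le_of_eq (Finset.sum_congr rfl fun j _ => ?_)
        exact abs_mul _ _
    _ = ∑ j ∈ univ.filter (fun j : Fin m => (j : ℕ) < k), ∑ i : Fin m,
          |U j i| * |V (Fin.castLE hmn j) (Fin.castLE hmn i)| :=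
        Finset.sum_comm
    _ ≤ ∑ j ∈ univ.filter (fun j : Fin m => (j : ℕ) < k), (1 : ℝ) := by
        refine Finset.sum_le_sum fun j _ => ?_
        refine le_trans (le_abs_self _)
          (cs_abs_le_one Finset.univ (fun i => |U j i|)
            (fun i => |V (Fin.castLE hmn j) (Fin.castLE hmn i)|) ?_ ?_)
        · simpa [sq_abs] using (hUrow j).le
        · simp only [sq_abs]
          calc ∑ i : Fin m, V (Fin.castLE hmn j) (Fin.castLE hmn i) ^ 2
              ≤ ∑ i : Fin n, V (Fin.castLE hmn j) i ^ 2 :=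
                hsub Finset.univ _ (fun _ => sq_nonneg _)
            _ = 1 := hVrow _
    _ = (k : ℝ) := by
        have hcard : (univ.filter (fun j : Fin m => (j : ℕ) < k)).card = k := by
          have heq : (univ.filter (fun j : Fin m => (j : ℕ) < k)) =
              (univ : Finset (Fin k)).map
                ⟨Fin.castLE hkm, Fin.castLE_injective hkm⟩ := by
            ext x
            simp only [Finset.mem_filter, Finset.mem_univ, true_and,
              Finset.mem_map, Function.Embedding.coeFn_mk]
            constructor
            · intro h; exact ⟨⟨x, h⟩, Fin.ext rfl⟩
            · rintro ⟨y, rfl⟩; exact y.isLt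
          rw [heq, Finset.card_map, Finset.card_univ, Fintype.card_fin]
        rw [Finset.sum_const, hcard, nsmul_eq_mul, mul_one]
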